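/- arXiv:1707.00789 — 5 statements merged into one kernel-verified Lean document; each statement's English description precedes it below -/
import Mathlib

section
/- Let O' ⊂ O ⊂ O_k be orders in a number field k (or étale algebra over ℚ), with conductors f' and f respectively (the conductor of an order is the largest O_k-ideal contained in it). Then f' ⊆ f. Moreover, if p is a prime number dividing N(f) but not dividing the index (O : O'), then the p-parts of f' and f coincide. -/
section Preliminaries

variable {k : Type*} [CommRing k]

/-- The largest `B`-ideal contained in the subring `A` of `k` (for `A ≤ B` this is the
conductor of the order `A`), realized as an ideal of `B`. -/
def conductorOf (A B : Subring k) : Ideal ↥B where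
  carrier := {x : ↥B | ∀ y : ↥B, (x : k) * (y : k) ∈ A}
  add_mem' := by
    intro x y hx hy z
    simpa [add_mul] using A.add_mem (hx z) (hy z)
  zero_mem' := by
    intro z
    simpa using A.zero_mem
  smul_mem' := by
    intro r x hx z
    have h := hx (r * z)
    have heq : ((r • x : ↥B) : k) * (z : k) = (x : k) * ((r * z : ↥B) : k) := by
      push_cast [smul_eq_mul]
      ring
    rw [heq]
    exact h

/-- The conductor of `A` in `B`, regarded as an ideal of the ring `A` (requires `A ≤ B`). -/
def conductorIn (A B : Subring k) (hAB : A ≤ B) : Ideal ↥A where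
  carrier := {x : ↥A | ∀ y : ↥B, (x : k) * (y : k) ∈ A}
  add_mem' := by
    intro x y hx hy z
    simpa [add_mul] using A.add_mem (hx z) (hy z)
  zero_mem' := by
    intro z
    simpa using A.zero_mem
  smul_mem' := by
    intro r x hx z
    have h := hx (⟨(r : k), hAB r.2⟩ * z)
    have heq : ((r • x : ↥A) : k) * (z : k)
        = (x : k) * (((⟨(r : k), hAB r.2⟩ : ↥B) * z : ↥B) : k) := by
      push_cast [smul_eq_mul]
      ring
    rw [heq]
    exact h

/-- The index `(B : A)` of one subring of `k` in another (as additive subgroups). -/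
noncomputable def subringIndex (A B : Subring k) : ℕ :=
  AddSubgroup.relIndex A.toAddSubgroup B.toAddSubgroup

/-- The norm of an ideal: the cardinality of the quotient ring. -/
noncomputable def idealNorm {R : Type*} [CommRing R] (I : Ideal R) : ℕ :=
  Nat.card (R ⧸ I)

end Preliminaries

section Etale

-- `k` is an étale algebra over `ℚ`: a finite-dimensional reduced commutative `ℚ`-algebra.
variable (k : Type*) [CommRing k] [Algebra ℚ k] [FiniteDimensional ℚ k] [IsReduced k]

/-- The maximal order of `k`: the integral closure of `ℤ` in `k`. -/
noncomputable def maximalOrder : Subring k := (integralClosure ℤ k).toSubring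

/-- An order of `k`: a subring of the maximal order of finite (additive) index. -/
def IsOrder (O : Subring k) : Prop :=
  O ≤ maximalOrder k ∧ subringIndex O (maximalOrder k) ≠ 0

end Etale

/-- The index of `A` in `B` kills the quotient: `n • x ∈ A` for `x ∈ B`. -/
lemma subringIndex_nsmul_mem {k : Type*} [CommRing k] (A B : Subring k) {x : k}
    (hx : x ∈ B) : (subringIndex A B) • x ∈ A := by
  have h := (A.toAddSubgroup.addSubgroupOf B.toAddSubgroup).nsmul_index_mem
    (⟨x, hx⟩ : B.toAddSubgroup)
  simpa [AddSubgroup.mem_addSubgroupOf, subringIndex, AddSubgroup.relIndex] using h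

/-- Let `O' ⊆ O ⊆ O_k` be orders in an étale algebra `k` over `ℚ`, with
conductors `f'` and `f`.  Then `f' ⊆ f`, and if `p` is a prime dividing `N(f)` but not
dividing the index `(O : O')`, then the `p`-parts of `f'` and `f` coincide (i.e.
`f' + p^m O_k = f + p^m O_k` for all sufficiently large `m`). -/
theorem conductor_le_and_pPart_eq
    (k : Type*) [CommRing k] [Algebra ℚ k] [FiniteDimensional ℚ k] [IsReduced k]
    (O O' : Subring k) (hO : IsOrder k O) (hO' : IsOrder k O') (hle : O' ≤ O) :
    conductorOf O' (maximalOrder k) ≤ conductorOf O (maximalOrder k) ∧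
    ∀ p : ℕ, p.Prime → p ∣ idealNorm (conductorOf O (maximalOrder k)) →
      ¬ p ∣ subringIndex O' O →
      ∃ N : ℕ, ∀ m ≥ N,
        conductorOf O' (maximalOrder k) ⊔ Ideal.span {((p : ↥(maximalOrder k)) ^ m)}
          = conductorOf O (maximalOrder k) ⊔ Ideal.span {((p : ↥(maximalOrder k)) ^ m)} := by
  have hsub : conductorOf O' (maximalOrder k) ≤ conductorOf O (maximalOrder k) := by
    intro x hx y
    exact hle (hx y)
  refine ⟨hsub, ?_⟩
  intro p hp _ hnd
  refine ⟨0, fun m _ => le_antisymm (sup_le_sup_right hsub _) ?_⟩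
  set n := subringIndex O' O with hn
  have hcop : Nat.Coprime (p ^ m) n :=
    Nat.Coprime.pow_left m ((Nat.Prime.coprime_iff_not_dvd hp).mpr hnd)
  have hcopZ : IsCoprime ((p : ℤ) ^ m) (n : ℤ) := by
    rw [← Nat.cast_pow, Nat.isCoprime_iff_coprime]
    exact hcop
  obtain ⟨a, b, hab⟩ := hcopZ
  refine sup_le ?_ le_sup_right
  intro x hx
  -- `n * x` lies in the conductor of `O'`
  have key : (n : ↥(maximalOrder k)) * x ∈ conductorOf O' (maximalOrder k) := by
    intro y
    have hxy : (x : k) * (y : k) ∈ O := hx y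
    have h := subringIndex_nsmul_mem O' O hxy
    have heq : (((n : ↥(maximalOrder k)) * x : ↥(maximalOrder k)) : k) * (y : k)
        = n • ((x : k) * (y : k)) := by
      push_cast [nsmul_eq_mul]
      ring
    rw [heq]
    exact h
  have h1 : (b : ↥(maximalOrder k)) * ((n : ↥(maximalOrder k)) * x)
      ∈ conductorOf O' (maximalOrder k) := Ideal.mul_mem_left _ _ key
  have h2 : (a : ↥(maximalOrder k)) * ((p : ↥(maximalOrder k)) ^ m * x)
      ∈ Ideal.span {((p : ↥(maximalOrder k)) ^ m)} := by
    apply Ideal.mul_mem_left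
    exact Ideal.mem_span_singleton.mpr ⟨x, rfl⟩
  have hx' : x = (b : ↥(maximalOrder k)) * ((n : ↥(maximalOrder k)) * x)
      + (a : ↥(maximalOrder k)) * ((p : ↥(maximalOrder k)) ^ m * x) := by
    have h := congrArg (fun t : ℤ => (t : ↥(maximalOrder k)) * x) hab
    push_cast at h
    linear_combination -h
  rw [hx']
  exact Submodule.add_mem_sup h1 h2
end

section
/- Let O' ⊂ O ⊂ O_k be orders and p a prime number not dividing the index (O_k : O). Let g be the largest O-ideal contained in O', and assume (O : g) is a power of p. Then g·O_k is the p-part of the conductor of O'. Moreover g·O_k ∩ O = g and O/g ≅ O_k/(g·O_k). -/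
set_option maxHeartbeats 2000000 in
/-- Let `O' ⊆ O ⊆ O_k` be orders and `p` a prime not dividing `(O_k : O)`.
Let `g` be the largest `O`-ideal contained in `O'`, and assume `(O : g)` is a power of `p`.
Then `g O_k` is the `p`-part of the conductor of `O'`, `g O_k ∩ O = g`, and
`O/g ≅ O_k/(g O_k)`. -/
theorem extension_of_relative_conductor
    (k : Type*) [CommRing k] [Algebra ℚ k] [FiniteDimensional ℚ k] [IsReduced k]
    (O O' : Subring k) (hO : IsOrder k O) (hO' : IsOrder k O') (hle : O' ≤ O)
    (p : ℕ) (hp : p.Prime) (hpO : ¬ p ∣ subringIndex O (maximalOrder k))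
    (hpow : ∃ r : ℕ, idealNorm (conductorOf O' O) = p ^ r) :
    (∃ N : ℕ, ∀ m ≥ N,
      conductorOf O' (maximalOrder k) ⊔ Ideal.span {((p : ↥(maximalOrder k)) ^ m)}
        = Ideal.map (Subring.inclusion hO.1) (conductorOf O' O)) ∧
    Ideal.comap (Subring.inclusion hO.1)
        (Ideal.map (Subring.inclusion hO.1) (conductorOf O' O)) = conductorOf O' O ∧
    Nonempty ((↥O ⧸ conductorOf O' O)
      ≃+* (↥(maximalOrder k) ⧸ Ideal.map (Subring.inclusion hO.1) (conductorOf O' O))) := by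
  
  classical
  obtain ⟨r, hr⟩ := hpow
  set Ok := maximalOrder k with hOkdef
  set ι : ↥O →+* ↥Ok := Subring.inclusion hO.1 with hιdef
  set g : Ideal ↥O := conductorOf O' O with hgdef
  set n : ℕ := subringIndex O Ok with hndef
  have hn0 : n ≠ 0 := hO.2
  have coeι : ∀ x : ↥O, ((ι x : ↥Ok) : k) = (x : k) := fun _ => rfl
  have memg : ∀ x : ↥O, x ∈ g ↔ ∀ y : ↥O, (x : k) * (y : k) ∈ O' := fun _ => Iff.rfl
  have memf : ∀ z : ↥Ok, z ∈ conductorOf O' Ok ↔ ∀ w : ↥Ok, (z : k) * (w : k) ∈ O' :=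
    fun _ => Iff.rfl
  have hgO' : ∀ x : ↥O, x ∈ g → (x : k) ∈ O' := by
    intro x hx
    simpa using (memg x).1 hx 1
  -- `n` kills `O_k / O`
  have lemA : ∀ y : ↥Ok, (n : k) * (y : k) ∈ O := by
    intro y
    have hy : (y : k) ∈ Ok.toAddSubgroup := y.2
    have h := AddSubgroup.nsmul_index_mem
      (O.toAddSubgroup.addSubgroupOf Ok.toAddSubgroup) (⟨(y : k), hy⟩ : ↥Ok.toAddSubgroup)
    rw [AddSubgroup.mem_addSubgroupOf] at h
    have hidx : (O.toAddSubgroup.addSubgroupOf Ok.toAddSubgroup).index = n := rfl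
    rw [hidx] at h
    simpa [nsmul_eq_mul] using h
  -- `p ^ r ∈ g`
  have hcard : Nat.card (↥O ⧸ g) = p ^ r := hr
  have prB : ((p : ↥O)) ^ r ∈ g := by
    rw [← Ideal.Quotient.eq_zero_iff_mem]
    have e1 : ((Ideal.Quotient.mk g) ((p : ↥O) ^ r)) = ((p ^ r : ℕ) : ↥O ⧸ g) := by
      rw [Nat.cast_pow, map_pow, map_natCast]
    rw [e1, ← hcard]
    have h2 := card_nsmul_eq_zero' (x := (1 : ↥O ⧸ g))
    simpa [nsmul_eq_mul] using h2
  -- Bezout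
  have hcop : ∀ m : ℕ, ∃ a b : ℤ, a * n + b * (p : ℤ) ^ m = 1 := by
    intro m
    have h1 : Nat.Coprime n (p ^ m) :=
      Nat.Coprime.pow_right m ((hp.coprime_iff_not_dvd.mpr hpO).symm)
    obtain ⟨a, b, hab⟩ := Nat.isCoprime_iff_coprime.mpr h1
    refine ⟨a, b, ?_⟩
    push_cast at hab
    linarith
  -- n * (g O_k) * O_k ⊆ O'
  have lemE : ∀ x ∈ g, ((n : ↥Ok) * ι x) ∈ conductorOf O' Ok := by
    intro x hx
    refine (memf _).2 fun w => ?_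
    have h1 : x * ⟨(n : k) * (w : k), lemA w⟩ ∈ g := Ideal.mul_mem_right _ _ hx
    have h2 := hgO' _ h1
    have e : (((n : ↥Ok) * ι x : ↥Ok) : k) * (w : k)
        = (x : k) * ((n : k) * (w : k)) := by
      push_cast
      rw [coeι]
      ring
    rw [e]
    exact h2
  have lemF : conductorOf O' Ok ≤ Ideal.map ι g := by
    intro z hz
    have hz' := (memf z).1 hz
    have hz1 : (z : k) ∈ O' := by simpa using hz' 1
    set x : ↥O := ⟨(z : k), hle hz1⟩ with hxdef
    have hxg : x ∈ g := (memg x).2 fun y => hz' ⟨(y : k), hO.1 y.2⟩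
    have : ι x = z := Subtype.ext rfl
    exact this ▸ Ideal.mem_map_of_mem ι hxg
  have lemG : ((p : ↥Ok)) ^ r ∈ Ideal.map ι g := by
    have e : ι ((p : ↥O) ^ r) = (p : ↥Ok) ^ r := by
      rw [map_pow, map_natCast]
    exact e ▸ Ideal.mem_map_of_mem ι prB
  have lemM : ∀ z ∈ Ideal.map ι g, ∀ w : ↥Ok, (n : k) * (z : k) * (w : k) ∈ O' := by
    have hmap : Ideal.map ι g = Ideal.span ((ι : ↥O → ↥Ok) '' (g : Set ↥O)) := rfl
    intro z hz
    rw [hmap] at hz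
    refine Submodule.span_induction ?_ ?_ ?_ ?_ hz
    · rintro _ ⟨x, hx, rfl⟩ w
      have h1 : x * ⟨(n : k) * (w : k), lemA w⟩ ∈ g := Ideal.mul_mem_right _ _ hx
      have h2 := hgO' _ h1
      have e : (n : k) * ((ι x : ↥Ok) : k) * (w : k) = (x : k) * ((n : k) * (w : k)) := by
        push_cast
        rw [coeι]
        ring
      rw [e]
      exact h2
    · intro w
      simpa using O'.zero_mem
    · intro z1 z2 _ _ h1 h2 w
      have e : (n : k) * ((z1 + z2 : ↥Ok) : k) * (w : k)
          = (n : k) * (z1 : k) * (w : k) + (n : k) * (z2 : k) * (w : k) := by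
        push_cast
        ring
      rw [e]
      exact O'.add_mem (h1 w) (h2 w)
    · intro c z _ h w
      have e : (n : k) * ((c • z : ↥Ok) : k) * (w : k)
          = (n : k) * (z : k) * (((c * w : ↥Ok) : k)) := by
        push_cast [smul_eq_mul]
        ring
      rw [e]
      exact h (c * w)
  -- Part 2 : comap (map g) = g
  have part2 : Ideal.comap ι (Ideal.map ι g) = g := by
    refine le_antisymm ?_ Ideal.le_comap_map
    intro x hx
    rw [Ideal.mem_comap] at hx
    refine (memg x).2 fun y => ?_
    obtain ⟨a, b, hab⟩ := hcop r
    have h1 : (n : k) * (x : k) * (y : k) ∈ O' := by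
      have := lemM (ι x) hx ⟨(y : k), hO.1 y.2⟩
      simpa [coeι] using this
    have h2 : (p : k) ^ r * ((x : k) * (y : k)) ∈ O' := by
      have hm : (p : ↥O) ^ r * x * y ∈ g :=
        Ideal.mul_mem_right _ _ (Ideal.mul_mem_right _ _ prB)
      have := hgO' _ hm
      have e : (((p : ↥O) ^ r * x * y : ↥O) : k) = (p : k) ^ r * ((x : k) * (y : k)) := by
        push_cast
        ring
      rwa [e] at this
    have habk : (a : k) * (n : k) + (b : k) * (p : k) ^ r = 1 := by
      have := congrArg (fun t : ℤ => (t : k)) hab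
      push_cast at this
      linear_combination this
    have key : (x : k) * (y : k)
        = (a : k) * ((n : k) * (x : k) * (y : k))
          + (b : k) * ((p : k) ^ r * ((x : k) * (y : k))) := by
      linear_combination (-((x : k) * (y : k))) * habk
    rw [key]
    exact O'.add_mem
      (by simpa [zsmul_eq_mul] using O'.zsmul_mem h1 a)
      (by simpa [zsmul_eq_mul] using O'.zsmul_mem h2 b)
  -- Part 1
  have part1 : ∀ m ≥ r,
      conductorOf O' Ok ⊔ Ideal.span {((p : ↥Ok) ^ m)} = Ideal.map ι g := by
    intro m hm
    apply le_antisymm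
    · refine sup_le lemF ?_
      rw [Ideal.span_le, Set.singleton_subset_iff]
      have e : (p : ↥Ok) ^ m = (p : ↥Ok) ^ (m - r) * (p : ↥Ok) ^ r := by
        rw [← pow_add, Nat.sub_add_cancel hm]
      rw [SetLike.mem_coe, e]
      exact Ideal.mul_mem_left _ _ lemG
    · rw [Ideal.map_le_iff_le_comap]
      intro x hx
      rw [Ideal.mem_comap]
      obtain ⟨a, b, hab⟩ := hcop m
      have habk : (a : ↥Ok) * (n : ↥Ok) + (b : ↥Ok) * (p : ↥Ok) ^ m = 1 := by
        have := congrArg (fun t : ℤ => (t : ↥Ok)) hab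
        push_cast at this
        linear_combination this
      have e : ι x = (a : ↥Ok) * ((n : ↥Ok) * ι x) + (b : ↥Ok) * ((p : ↥Ok) ^ m * ι x) := by
        linear_combination (-(ι x)) * habk
      rw [e]
      refine Ideal.add_mem _
        (Ideal.mem_sup_left (Ideal.mul_mem_left _ _ (lemE x hx)))
        (Ideal.mem_sup_right (Ideal.mul_mem_left _ _ ?_))
      exact Ideal.mem_span_singleton.mpr (dvd_mul_right _ _)
  -- Part 3 : the isomorphism
  have hle2 : g ≤ Ideal.comap ι (Ideal.map ι g) := Ideal.le_comap_map
  have hinj : Function.Injective (Ideal.quotientMap (Ideal.map ι g) ι hle2) :=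
    Ideal.quotientMap_injective' (le_of_eq part2)
  have hsurj : Function.Surjective (Ideal.quotientMap (Ideal.map ι g) ι hle2) := by
    intro zbar
    obtain ⟨z, rfl⟩ := Ideal.Quotient.mk_surjective zbar
    obtain ⟨a, b, hab⟩ := hcop r
    refine ⟨Ideal.Quotient.mk g ((a : ↥O) * (⟨(n : k) * (z : k), lemA z⟩ : ↥O)), ?_⟩
    rw [Ideal.quotientMap_mk, Ideal.Quotient.eq]
    have habk : (a : k) * (n : k) + (b : k) * (p : k) ^ r = 1 := by
      have := congrArg (fun t : ℤ => (t : k)) hab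
      push_cast at this
      linear_combination this
    have e : ι ((a : ↥O) * (⟨(n : k) * (z : k), lemA z⟩ : ↥O)) - z
        = ((-b : ℤ) : ↥Ok) * ((p : ↥Ok) ^ r * z) := by
      apply Subtype.ext
      push_cast
      rw [coeι]
      push_cast
      linear_combination (z : k) * habk
    rw [e]
    exact Ideal.mul_mem_left _ _ (Ideal.mul_mem_right _ _ lemG)
  exact ⟨⟨r, part1⟩, part2,
    ⟨RingEquiv.ofBijective (Ideal.quotientMap (Ideal.map ι g) ι hle2) ⟨hinj, hsurj⟩⟩⟩
end

section
/- Let F and F' be integral binary cubic forms such that the cubic ring R(F') is a subring of R(F). Then there exists a 2×2 integer matrix δ with |det δ| = (R(F) : R(F')) such that F' = δ·F, where the action is (δ·F)(u) = (det δ)^{-1} F(uδ). -/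
lemma basis_coord_eq {M : Type*} [AddCommGroup M] [Module ℤ M] (e : Module.Basis (Fin 3) ℤ M)
    {x0 x1 x2 y0 y1 y2 : ℤ}
    (h : x0 • e 0 + x1 • e 1 + x2 • e 2 = y0 • e 0 + y1 • e 1 + y2 • e 2) :
    x0 = y0 ∧ x1 = y1 ∧ x2 = y2 := by
  have key : ∀ i : Fin 3, (Finsupp.single (0:Fin 3) x0) i
      + (Finsupp.single (1:Fin 3) x1) i + (Finsupp.single (2:Fin 3) x2) i
      = (Finsupp.single (0:Fin 3) y0) i + (Finsupp.single (1:Fin 3) y1) i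
        + (Finsupp.single (2:Fin 3) y2) i := by
    intro i
    have := congrArg (fun z => e.repr z i) h
    simpa [map_add, map_smul, Module.Basis.repr_self, Finsupp.smul_single] using this
  refine ⟨?_, ?_, ?_⟩
  · simpa [Finsupp.single_apply] using key 0
  · simpa [Finsupp.single_apply] using key 1
  · simpa [Finsupp.single_apply] using key 2

lemma index_eq_natAbs_det {M : Type*} [AddCommGroup M] (bM : Module.Basis (Fin 3) ℤ M)
    (N : Submodule ℤ M) (bN : Module.Basis (Fin 3) ℤ N) :
    N.toAddSubgroup.index = (bM.det ((↑) ∘ bN)).natAbs := by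
  obtain ⟨n, snf⟩ := N.smithNormalForm bM
  have hn : n = 3 := by
    have := Fintype.card_congr (snf.bN.indexEquiv bN)
    simpa using this
  subst hn
  have hidx : N.toAddSubgroup.index = (∏ i : Fin 3, (snf.a i).natAbs) := by
    rw [snf.toAddSubgroup_index_eq_pow_mul_prod]
    simp [Int.index_zmultiples]
  have hdet : (bM.det ((↑) ∘ bN)).natAbs
      = (LinearMap.det (N.subtype ∘ₗ (bM.equiv bN (Equiv.refl _) : M →ₗ[ℤ] N))).natAbs := by
    rw [← Module.Basis.det_comp_basis]
    rfl
  have hdet2 : (LinearMap.det (N.subtype ∘ₗ (bM.equiv bN (Equiv.refl _) : M →ₗ[ℤ] N))).natAbs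
      = (LinearMap.det (N.subtype ∘ₗ (snf.bM.equiv snf.bN (Equiv.refl _) : M →ₗ[ℤ] N))).natAbs :=
    Int.natAbs_eq_iff_associated.mpr (LinearMap.associated_det_comp_equiv _ _ _)
  have hbij : Function.Bijective snf.f := Finite.injective_iff_bijective.mp snf.f.injective
  set σ : Equiv.Perm (Fin 3) := Equiv.ofBijective snf.f hbij with hσ
  have hmat : LinearMap.toMatrix snf.bM snf.bM
        (N.subtype ∘ₗ (snf.bM.equiv snf.bN (Equiv.refl _) : M →ₗ[ℤ] N))
      = (Matrix.diagonal snf.a).submatrix σ.symm id := by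
    ext j i
    rw [LinearMap.toMatrix_apply]
    have : (N.subtype ∘ₗ (snf.bM.equiv snf.bN (Equiv.refl _) : M →ₗ[ℤ] N)) (snf.bM i)
        = snf.a i • snf.bM (snf.f i) := by
      simp [Module.Basis.equiv_apply, snf.snf]
    rw [this, map_smul, Module.Basis.repr_self, Matrix.submatrix_apply, Matrix.diagonal_apply]
    by_cases h : snf.f i = j
    · have h' : σ.symm j = i := by
        rw [← h]; exact σ.symm_apply_apply i
      simp [h, h', Finsupp.single_apply]
    · have h' : σ.symm j ≠ i := by
        intro hc; exact h (by rw [← hc]; exact (σ.apply_symm_apply j))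
      simp [h, h', Finsupp.single_apply]
  have hdet3 : (LinearMap.det
        (N.subtype ∘ₗ (snf.bM.equiv snf.bN (Equiv.refl _) : M →ₗ[ℤ] N))).natAbs
      = (∏ i : Fin 3, (snf.a i).natAbs) := by
    rw [← LinearMap.det_toMatrix snf.bM, hmat, Matrix.det_permute, Matrix.det_diagonal]
    rcases Int.units_eq_one_or (Equiv.Perm.sign (Equiv.symm σ)) with h1 | h1 <;> rw [h1] <;>
      simp [Int.natAbs_neg] <;> exact map_prod Int.natAbsHom snf.a Finset.univ
  omega

/-- `R` is the cubic ring attached (by the Delone–Faddeev correspondence) to the integral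
binary cubic form `F(u) = a u₁³ + b u₁²u₂ + c u₁u₂² + d u₂³`:  it has a `ℤ`-basis
`{1, ω, θ}` with `ω² = -ac + bω - aθ`, `θ² = -bd + dω - cθ`, `ωθ = -ad`. -/
def IsCubicRingOf (R : Type*) [CommRing R] (a b c d : ℤ) : Prop :=
  ∃ e : Module.Basis (Fin 3) ℤ R, e 0 = 1 ∧
    (e 1) * (e 1) = (-(a * c)) • (1 : R) + b • (e 1) + (-a) • (e 2) ∧
    (e 2) * (e 2) = (-(b * d)) • (1 : R) + d • (e 1) + (-c) • (e 2) ∧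
    (e 1) * (e 2) = (-(a * d)) • (1 : R)

/-- Let `F, F'` be integral binary cubic forms with `R(F') ⊆ R(F)`.
Then there is a `2 × 2` integer matrix `δ` with `|det δ| = (R(F) : R(F'))` and
`F' = δ ⋅ F`, i.e. `(det δ) F'(u) = F(u δ)` for all `u`. -/
theorem cubic_subring_transform
    (R : Type*) [CommRing R] (S : Subring R)
    (a b c d a' b' c' d' : ℤ)
    (hF : IsCubicRingOf R a b c d) (hF' : IsCubicRingOf ↥S a' b' c' d') :
    ∃ δ : Matrix (Fin 2) (Fin 2) ℤ,
      δ.det.natAbs = S.toAddSubgroup.index ∧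
      ∀ u v : ℤ,
        δ.det * (a' * u ^ 3 + b' * u ^ 2 * v + c' * u * v ^ 2 + d' * v ^ 3)
          = a * (u * δ 0 0 + v * δ 1 0) ^ 3
            + b * (u * δ 0 0 + v * δ 1 0) ^ 2 * (u * δ 0 1 + v * δ 1 1)
            + c * (u * δ 0 0 + v * δ 1 0) * (u * δ 0 1 + v * δ 1 1) ^ 2
            + d * (u * δ 0 1 + v * δ 1 1) ^ 3 := by
  classical
  obtain ⟨e, he0, hEw, hEt, hEwt⟩ := hF
  obtain ⟨f, hf0, hFw, hFt, hFwt⟩ := hF'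
  set w : R := ((f 1 : ↥S) : R) with hw_def
  set z : R := ((f 2 : ↥S) : R) with hz_def
  set p := e.repr w 0 with hp
  set q := e.repr w 1 with hq
  set r := e.repr w 2 with hr
  set s := e.repr z 0 with hs
  set t := e.repr z 1 with ht
  set u₁ := e.repr z 2 with hu₁
  -- expansions of w and z in the basis e (in cast-multiplication form)
  have hw : w = (p : R) + (q : R) * e 1 + (r : R) * e 2 := by
    have h := e.sum_repr w
    rw [Fin.sum_univ_three] at h
    rw [← h, he0, ← hp, ← hq, ← hr]
    simp [zsmul_eq_mul]
  have hz : z = (s : R) + (t : R) * e 1 + (u₁ : R) * e 2 := by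
    have h := e.sum_repr z
    rw [Fin.sum_univ_three] at h
    rw [← h, he0, ← hs, ← ht, ← hu₁]
    simp [zsmul_eq_mul]
  -- the multiplication relations in R, in cast form
  have hEw' : e 1 * e 1 = -((a:R) * (c:R)) + (b:R) * e 1 + (-(a:R)) * e 2 := by
    rw [hEw]; simp only [zsmul_eq_mul, mul_one]; push_cast; ring
  have hEt' : e 2 * e 2 = -((b:R) * (d:R)) + (d:R) * e 1 + (-(c:R)) * e 2 := by
    rw [hEt]; simp only [zsmul_eq_mul, mul_one]; push_cast; ring
  have hEwt' : e 1 * e 2 = -((a:R) * (d:R)) := by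
    rw [hEwt]; simp only [zsmul_eq_mul, mul_one]; push_cast; ring
  -- the multiplication relations of S, coerced into R
  have hS1 : w * w = -((a':R) * (c':R)) + (b':R) * w + (-(a':R)) * z := by
    have h := hFw
    simp only [zsmul_eq_mul, mul_one] at h
    have h2 := congrArg (fun x : ↥S => (x : R)) h
    push_cast at h2
    rw [hw_def, hz_def]
    convert h2 using 2 <;> push_cast <;> ring
  have hS2 : z * z = -((b':R) * (d':R)) + (d':R) * w + (-(c':R)) * z := by
    have h := hFt
    simp only [zsmul_eq_mul, mul_one] at h
    have h2 := congrArg (fun x : ↥S => (x : R)) h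
    push_cast at h2
    rw [hw_def, hz_def]
    convert h2 using 2 <;> push_cast <;> ring
  have hS3 : w * z = -((a':R) * (d':R)) := by
    have h := hFwt
    simp only [zsmul_eq_mul, mul_one] at h
    have h2 := congrArg (fun x : ↥S => (x : R)) h
    push_cast at h2
    rw [hw_def, hz_def]
    convert h2 using 2 <;> push_cast <;> ring
  -- coordinate equations
  have key1 : (p^2 - a*c*q^2 - b*d*r^2 - 2*(a*d)*q*r) • e 0
        + (b*q^2 + d*r^2 + 2*p*q) • e 1 + (-(a*q^2) - c*r^2 + 2*p*r) • e 2
      = (-(a'*c') + b'*p - a'*s) • e 0 + (b'*q - a'*t) • e 1 + (b'*r - a'*u₁) • e 2 := by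
    simp only [zsmul_eq_mul, he0, mul_one]
    push_cast
    linear_combination ((b':R) - w - ((p:R) + (q:R) * e 1 + (r:R) * e 2)) * hw + hS1
      - (a':R) * hz - (q:R)^2 * hEw' - (r:R)^2 * hEt' - 2*(q:R)*(r:R) * hEwt'
  have key2 : (s^2 - a*c*t^2 - b*d*u₁^2 - 2*(a*d)*t*u₁) • e 0
        + (b*t^2 + d*u₁^2 + 2*s*t) • e 1 + (-(a*t^2) - c*u₁^2 + 2*s*u₁) • e 2
      = (-(b'*d') + d'*p - c'*s) • e 0 + (d'*q - c'*t) • e 1 + (d'*r - c'*u₁) • e 2 := by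
    simp only [zsmul_eq_mul, he0, mul_one]
    push_cast
    linear_combination (-(z) - ((s:R) + (t:R) * e 1 + (u₁:R) * e 2) - (c':R)) * hz + hS2
      + (d':R) * hw - (t:R)^2 * hEw' - (u₁:R)^2 * hEt' - 2*(t:R)*(u₁:R) * hEwt'
  have key3 : (p*s - a*c*q*t - b*d*r*u₁ - a*d*(q*u₁ + r*t)) • e 0
        + (b*q*t + d*r*u₁ + p*t + q*s) • e 1 + (-(a*q*t) - c*r*u₁ + p*u₁ + r*s) • e 2
      = (-(a'*d')) • e 0 + (0:ℤ) • e 1 + (0:ℤ) • e 2 := by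
    simp only [zsmul_eq_mul, he0, mul_one]
    push_cast
    linear_combination hS3 - w * hz - ((s:R) + (t:R) * e 1 + (u₁:R) * e 2) * hw
      - (q:R)*(t:R) * hEw' - (r:R)*(u₁:R) * hEt' - ((q:R)*(u₁:R) + (r:R)*(t:R)) * hEwt'
  obtain ⟨-, E1, E2⟩ := basis_coord_eq e key1
  obtain ⟨-, E3, E4⟩ := basis_coord_eq e key2
  obtain ⟨-, E6, E7⟩ := basis_coord_eq e key3
  -- the four covariance identities
  have hT1 : (q*u₁ - r*t) * a' = a*q^3 + b*q^2*r + c*q*r^2 + d*r^3 := by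
    linear_combination q * E2 - r * E1
  have hT2 : (q*u₁ - r*t) * b'
      = 3*a*q^2*t + b*(q^2*u₁ + 2*q*r*t) + c*(r^2*t + 2*q*r*u₁) + 3*d*r^2*u₁ := by
    linear_combination (-u₁) * E1 + t * E2 + 2*q * E7 - 2*r * E6
  have hT3 : (q*u₁ - r*t) * c'
      = 3*a*q*t^2 + b*(r*t^2 + 2*q*t*u₁) + c*(q*u₁^2 + 2*r*t*u₁) + 3*d*r*u₁^2 := by
    linear_combination q * E4 - r * E3 + 2*t * E7 - 2*u₁ * E6
  have hT4 : (q*u₁ - r*t) * d' = a*t^3 + b*t^2*u₁ + c*t*u₁^2 + d*u₁^3 := by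
    linear_combination t * E4 - u₁ * E3
  -- the index computation
  set N : Submodule ℤ R := AddSubgroup.toIntSubmodule S.toAddSubgroup with hN
  have hmemN : ∀ x : ↥S, (x : R) ∈ N := fun x => x.2
  let g : ↥S ≃ₗ[ℤ] ↥N := AddEquiv.toIntLinearEquiv
    { toFun := fun x => ⟨x.1, hmemN x⟩
      invFun := fun x => ⟨x.1, x.2⟩
      left_inv := fun x => rfl
      right_inv := fun x => rfl
      map_add' := fun x y => rfl }
  let bN : Module.Basis (Fin 3) ℤ ↥N := f.map g
  have hidx := index_eq_natAbs_det e N bN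
  have hNS : N.toAddSubgroup = S.toAddSubgroup :=
    AddSubgroup.toIntSubmodule_toAddSubgroup S.toAddSubgroup
  have hcoe : ∀ i, ((bN i : ↥N) : R) = ((f i : ↥S) : R) := fun i => rfl
  have hmat : e.toMatrix ((↑) ∘ bN) = !![(1:ℤ), p, s; 0, q, t; 0, r, u₁] := by
    ext j i
    fin_cases i <;> fin_cases j <;>
      simp [Module.Basis.toMatrix_apply, hcoe, hf0, ← he0, Module.Basis.repr_self, ← hw_def, ← hz_def,
        ← hp, ← hq, ← hr, ← hs, ← ht, ← hu₁, Finsupp.single_apply,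
        Matrix.vecHead, Matrix.vecTail]
  have hdetval : e.det ((↑) ∘ bN) = q*u₁ - r*t := by
    rw [Module.Basis.det_apply, hmat, Matrix.det_fin_three]
    simp [Matrix.vecHead, Matrix.vecTail]
    ring
  refine ⟨!![q, r; t, u₁], ?_, ?_⟩
  · have hδ : (Matrix.det !![q, r; t, u₁]) = q*u₁ - r*t := by
      rw [Matrix.det_fin_two_of]
    rw [hδ, ← hdetval, ← hidx, hNS]
  · intro x y
    have h00 : (!![q, r; t, u₁]) 0 0 = q := rfl
    have h01 : (!![q, r; t, u₁]) 0 1 = r := rfl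
    have h10 : (!![q, r; t, u₁]) 1 0 = t := rfl
    have h11 : (!![q, r; t, u₁]) 1 1 = u₁ := rfl
    have hδ : (Matrix.det !![q, r; t, u₁]) = q*u₁ - r*t := by
      rw [Matrix.det_fin_two_of]
    rw [h00, h01, h10, h11, hδ]
    linear_combination x^3 * hT1 + x^2*y * hT2 + x*y^2 * hT3 + y^3 * hT4
end

section
/- Let k be an étale cubic algebra over ℚ and f a square-free positive integer such that no prime dividing f is of type 3 in k. Then for each ideal f of O_k with fO_k ⊆ f and N(f) = f², there exists exactly one order R of index f in O_k whose conductor is f, namely R = ℤ + f. -/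
lemma squarefree_dvd_of_forall_prime_dvd {f n : ℕ} (hsf : Squarefree f)
    (h : ∀ p : ℕ, p.Prime → p ∣ f → p ∣ n) : f ∣ n := by
  rcases eq_or_ne n 0 with rfl | hn
  · exact dvd_zero f
  have hf : f ≠ 0 := hsf.ne_zero
  rw [← Nat.factorization_le_iff_dvd hf hn]
  refine Finsupp.le_def.mpr fun p => ?_
  by_cases hp : p.Prime
  · by_cases hpf : p ∣ f
    · have h1 : f.factorization p ≤ 1 := hsf.natFactorization_le_one p
      have h2 : 0 < n.factorization p := hp.factorization_pos_of_dvd hn (h p hp hpf)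
      omega
    · simp [Nat.factorization_eq_zero_of_not_dvd hpf]
  · simp [Nat.factorization_eq_zero_of_not_prime _ hp]

lemma prime_dvd_of_zsmul_eq_zero {G : Type*} [AddCommGroup G] [Finite G] {p : ℕ}
    (hp : p.Prime) (hcard : p ∣ Nat.card G) {n : ℤ} (hn : ∀ x : G, n • x = 0) :
    (p : ℤ) ∣ n := by
  cases nonempty_fintype G
  have : Fact p.Prime := ⟨hp⟩
  obtain ⟨x, hx⟩ := exists_prime_addOrderOf_dvd_card (G := G) p (by rwa [← Nat.card_eq_fintype_card])
  have := addOrderOf_dvd_iff_zsmul_eq_zero.mpr (hn x)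
  rwa [hx] at this

/-- `ℤ + 𝔣` as a subring. -/
def ZPlusIdeal {A : Type*} [CommRing A] (𝔣 : Ideal A) : Subring A where
  carrier := {x | ∃ n : ℤ, x - n • 1 ∈ 𝔣}
  one_mem' := ⟨1, by simp⟩
  zero_mem' := ⟨0, by simp⟩
  add_mem' := by
    rintro x y ⟨n, hn⟩ ⟨m, hm⟩
    refine ⟨n + m, ?_⟩
    have : x + y - (n + m) • 1 = (x - n • 1) + (y - m • 1) := by
      simp [zsmul_eq_mul]; ring
    rw [this]; exact Ideal.add_mem _ hn hm
  neg_mem' := by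
    rintro x ⟨n, hn⟩
    refine ⟨-n, ?_⟩
    have : -x - (-n) • 1 = -(x - n • 1) := by simp [zsmul_eq_mul]; ring
    rw [this]; exact neg_mem hn
  mul_mem' := by
    rintro x y ⟨n, hn⟩ ⟨m, hm⟩
    refine ⟨n * m, ?_⟩
    have : x * y - (n * m) • 1 = x * (y - m • 1) + (x - n • 1) * (m • 1) := by
      simp [zsmul_eq_mul]; ring
    rw [this]
    exact Ideal.add_mem _ (Ideal.mul_mem_left _ _ hm) (Ideal.mul_mem_right _ _ hn)

lemma mem_ZPlusIdeal {A : Type*} [CommRing A] {𝔣 : Ideal A} {x : A} :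
    x ∈ ZPlusIdeal 𝔣 ↔ ∃ n : ℤ, x - n • 1 ∈ 𝔣 := Iff.rfl

lemma ideal_le_ZPlusIdeal {A : Type*} [CommRing A] (𝔣 : Ideal A) {x : A} (hx : x ∈ 𝔣) :
    x ∈ ZPlusIdeal 𝔣 := ⟨0, by simpa⟩

section Core
variable {A : Type*} [CommRing A] (𝔣 : Ideal A) {f : ℕ}

/-- `ZPlusIdeal 𝔣` as comap of `zmultiples 1`. -/
lemma ZPlusIdeal_eq_comap :
    (ZPlusIdeal 𝔣).toAddSubgroup =
      (AddSubgroup.zmultiples (1 : A ⧸ 𝔣)).comap (Ideal.Quotient.mk 𝔣).toAddMonoidHom := by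
  ext x
  simp only [Subring.mem_toAddSubgroup, mem_ZPlusIdeal, AddSubgroup.mem_comap,
    AddSubgroup.mem_zmultiples_iff, RingHom.toAddMonoidHom_eq_coe, AddMonoidHom.coe_coe]
  constructor
  · rintro ⟨n, hn⟩
    refine ⟨n, ?_⟩
    have := Ideal.Quotient.eq_zero_iff_mem.mpr hn
    rw [map_sub, map_zsmul, map_one, sub_eq_zero] at this
    exact this.symm
  · rintro ⟨n, hn⟩
    refine ⟨n, ?_⟩
    rw [← Ideal.Quotient.eq_zero_iff_mem, map_sub, map_zsmul, map_one, sub_eq_zero]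
    exact hn.symm

lemma zmultiples_one_index (hf : 0 < f) (hsf : Squarefree f) (hmem : (f : A) ∈ 𝔣)
    (hnorm : Nat.card (A ⧸ 𝔣) = f ^ 2) :
    (AddSubgroup.zmultiples (1 : A ⧸ 𝔣)).index = f := by
  have hQfin : Finite (A ⧸ 𝔣) := Nat.finite_of_card_ne_zero (by rw [hnorm]; positivity)
  -- the additive order of 1 is f
  have hcast : ((f : ℕ) : A ⧸ 𝔣) = 0 := by
    rw [← map_natCast (Ideal.Quotient.mk 𝔣)]
    exact Ideal.Quotient.eq_zero_iff_mem.mpr hmem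
  have hm_dvd : addOrderOf (1 : A ⧸ 𝔣) ∣ f :=
    addOrderOf_dvd_of_nsmul_eq_zero (by rw [nsmul_eq_mul, mul_one]; exact hcast)
  have hf_dvd : f ∣ addOrderOf (1 : A ⧸ 𝔣) := by
    apply squarefree_dvd_of_forall_prime_dvd hsf
    intro p hp hpf
    have hone : ((addOrderOf (1 : A ⧸ 𝔣) : ℕ) : A ⧸ 𝔣) = 0 := by
      have := addOrderOf_nsmul_eq_zero (1 : A ⧸ 𝔣)
      rwa [nsmul_eq_mul, mul_one] at this
    have hpc : p ∣ Nat.card (A ⧸ 𝔣) := by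
      rw [hnorm]; exact hpf.trans (dvd_pow_self f two_ne_zero)
    have hz : ∀ x : A ⧸ 𝔣, ((addOrderOf (1 : A ⧸ 𝔣) : ℤ)) • x = 0 := by
      intro x
      rw [zsmul_eq_mul]
      push_cast
      rw [hone, zero_mul]
    have := prime_dvd_of_zsmul_eq_zero hp hpc hz
    exact_mod_cast this
  have hm : addOrderOf (1 : A ⧸ 𝔣) = f := Nat.dvd_antisymm hm_dvd hf_dvd
  have hL := AddSubgroup.index_mul_card (AddSubgroup.zmultiples (1 : A ⧸ 𝔣))
  rw [Nat.card_zmultiples, hm, hnorm, pow_two] at hL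
  exact Nat.eq_of_mul_eq_mul_right hf hL

lemma ZPlusIdeal_index (hf : 0 < f) (hsf : Squarefree f) (hmem : (f : A) ∈ 𝔣)
    (hnorm : Nat.card (A ⧸ 𝔣) = f ^ 2) :
    (ZPlusIdeal 𝔣).toAddSubgroup.index = f := by
  rw [ZPlusIdeal_eq_comap,
    AddSubgroup.index_comap_of_surjective _ Ideal.Quotient.mk_surjective]
  exact zmultiples_one_index 𝔣 hf hsf hmem hnorm

end Core
/-- Let `k` be an étale cubic algebra over `ℚ` and `f` a square-free
positive integer such that no prime dividing `f` is of type `3` in `k`.  Then for each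
ideal `𝔣` of `O_k` with `f O_k ⊆ 𝔣` and `N(𝔣) = f²`, there is exactly one order `R`
of index `f` in `O_k` with conductor `𝔣`, namely `R = ℤ + 𝔣`. -/
theorem squarefree_index_order_unique
    (k : Type*) [CommRing k] [Algebra ℚ k] [FiniteDimensional ℚ k] [IsReduced k]
    (hdeg : Module.finrank ℚ k = 3)
    (f : ℕ) (hf : 0 < f) (hsf : Squarefree f)
    (htype : ∀ p : ℕ, p.Prime → p ∣ f →
      ¬ ((Ideal.span {(p : ↥(maximalOrder k))}).IsPrime ∧
          idealNorm (Ideal.span {(p : ↥(maximalOrder k))}) = p ^ 3)) :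
    ∀ 𝔣 : Ideal ↥(maximalOrder k),
      Ideal.span {(f : ↥(maximalOrder k))} ≤ 𝔣 → idealNorm 𝔣 = f ^ 2 →
      (∃! O : Subring k, IsOrder k O ∧ subringIndex O (maximalOrder k) = f ∧
          conductorOf O (maximalOrder k) = 𝔣) ∧
      (∀ O : Subring k, IsOrder k O → subringIndex O (maximalOrder k) = f →
        conductorOf O (maximalOrder k) = 𝔣 →
        ∀ x : ↥(maximalOrder k),
          (x : k) ∈ O ↔ ∃ n : ℤ, x - n • (1 : ↥(maximalOrder k)) ∈ 𝔣) := by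
  intro 𝔣 hspan hnorm
  have hnorm' : Nat.card (↥(maximalOrder k) ⧸ 𝔣) = f ^ 2 := hnorm
  have hfmem : ((f : ℕ) : ↥(maximalOrder k)) ∈ 𝔣 := hspan (Ideal.mem_span_singleton_self _)
  set S : Subring k := (ZPlusIdeal 𝔣).map (maximalOrder k).subtype with hSdef
  have hmemS : ∀ x : ↥(maximalOrder k), ((x : k) ∈ S ↔ ∃ n : ℤ, x - n • 1 ∈ 𝔣) := by
    intro x
    constructor
    · rintro ⟨y, hy, hyx⟩
      obtain rfl : y = x := Subtype.coe_injective hyx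
      exact hy
    · intro hx
      exact ⟨x, hx, rfl⟩
  have hSle : S ≤ maximalOrder k := by
    rintro x ⟨y, hy, rfl⟩
    exact y.2
  have hNidx : (ZPlusIdeal 𝔣).toAddSubgroup.index = f :=
    ZPlusIdeal_index 𝔣 hf hsf hfmem hnorm'
  -- index of S in Ok
  have hidxS : subringIndex S (maximalOrder k) = f := by
    let ρ : ↥((maximalOrder k).toAddSubgroup) →+ ↥(maximalOrder k) :=
      { toFun := fun x => ⟨x.1, Subring.mem_toAddSubgroup.mp x.2⟩
        map_zero' := rfl
        map_add' := fun x y => rfl }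
    have hρsurj : Function.Surjective ρ :=
      fun y => ⟨⟨y.1, Subring.mem_toAddSubgroup.mpr y.2⟩, rfl⟩
    have key : S.toAddSubgroup.addSubgroupOf (maximalOrder k).toAddSubgroup =
        (AddSubgroup.zmultiples (1 : ↥(maximalOrder k) ⧸ 𝔣)).comap
          (((Ideal.Quotient.mk 𝔣).toAddMonoidHom).comp ρ) := by
      ext x
      rw [AddSubgroup.mem_addSubgroupOf, Subring.mem_toAddSubgroup, AddSubgroup.mem_comap]
      have h1 : ((x : k) ∈ S) ↔ (ρ x) ∈ ZPlusIdeal 𝔣 := by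
        constructor
        · rintro ⟨y, hy, hyx⟩
          obtain rfl : y = ρ x := Subtype.coe_injective hyx
          exact hy
        · intro hx
          exact ⟨ρ x, hx, rfl⟩
      rw [h1]
      have h2 := AddSubgroup.ext_iff.mp (ZPlusIdeal_eq_comap 𝔣) (ρ x)
      rw [Subring.mem_toAddSubgroup] at h2
      rw [h2]
      rfl
    have hsurj : Function.Surjective
        (((Ideal.Quotient.mk 𝔣).toAddMonoidHom).comp ρ) := by
      rw [AddMonoidHom.coe_comp]
      exact Function.Surjective.comp (fun q => Ideal.Quotient.mk_surjective q) hρsurj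
    have : subringIndex S (maximalOrder k) =
        (S.toAddSubgroup.addSubgroupOf (maximalOrder k).toAddSubgroup).index := rfl
    rw [this, key, AddSubgroup.index_comap_of_surjective _ hsurj]
    exact zmultiples_one_index 𝔣 hf hsf hfmem hnorm'
  -- conductor of S is 𝔣
  have hcond : conductorOf S (maximalOrder k) = 𝔣 := by
    apply le_antisymm
    · intro x hx
      have hx' : ∀ y : ↥(maximalOrder k), (x : k) * (y : k) ∈ S := hx
      have hmul : ∀ y : ↥(maximalOrder k), x * y ∈ ZPlusIdeal 𝔣 := by
        intro y
        have : ((x * y : ↥(maximalOrder k)) : k) ∈ S := by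
          push_cast
          exact hx' y
        exact (hmemS (x * y)).mp this
      obtain ⟨n, hn⟩ := (hmemS x).mp (by simpa using hx' 1)
      have hkill : ∀ y : ↥(maximalOrder k), n • y ∈ ZPlusIdeal 𝔣 := by
        intro y
        have h2 : (x - n • 1) * y ∈ ZPlusIdeal 𝔣 :=
          ideal_le_ZPlusIdeal _ (Ideal.mul_mem_right _ _ hn)
        have heq : n • y = x * y - (x - n • 1) * y := by
          rw [zsmul_eq_mul, zsmul_eq_mul]
          ring
        rw [heq]
        exact Subring.sub_mem _ (hmul y) h2
      have hNfin : Finite (↥(maximalOrder k) ⧸ (ZPlusIdeal 𝔣).toAddSubgroup) := by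
        apply Nat.finite_of_card_ne_zero
        rw [← AddSubgroup.index_eq_card, hNidx]
        exact hf.ne'
      have hq : ∀ q : ↥(maximalOrder k) ⧸ (ZPlusIdeal 𝔣).toAddSubgroup, n • q = 0 := by
        intro q
        induction q using QuotientAddGroup.induction_on with
        | H y =>
          have : ((n • y : ↥(maximalOrder k)) : ↥(maximalOrder k) ⧸ (ZPlusIdeal 𝔣).toAddSubgroup) = 0 :=
            (QuotientAddGroup.eq_zero_iff _).mpr (hkill y)
          simpa using this
      have hfn : (f : ℤ) ∣ n := by
        have hall : ∀ p : ℕ, p.Prime → p ∣ f → p ∣ n.natAbs := by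
          intro p hp hpf
          have hpcard : p ∣ Nat.card (↥(maximalOrder k) ⧸ (ZPlusIdeal 𝔣).toAddSubgroup) := by
            rw [← AddSubgroup.index_eq_card, hNidx]
            exact hpf
          have hd := prime_dvd_of_zsmul_eq_zero hp hpcard hq
          have := Int.natAbs_dvd_natAbs.mpr hd
          simpa using this
        have hfd : f ∣ n.natAbs := squarefree_dvd_of_forall_prime_dvd hsf hall
        exact (Int.natCast_dvd_natCast.mpr hfd).trans (Int.natAbs_dvd.mpr dvd_rfl)
      have hn1 : n • (1 : ↥(maximalOrder k)) ∈ 𝔣 := by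
        obtain ⟨c, rfl⟩ := hfn
        have heq : ((f : ℤ) * c) • (1 : ↥(maximalOrder k)) = (c • (1 : ↥(maximalOrder k))) * ((f : ℕ) : ↥(maximalOrder k)) := by
          rw [zsmul_eq_mul, zsmul_eq_mul]
          push_cast
          ring
        rw [heq]
        exact Ideal.mul_mem_left _ _ hfmem
      have hxeq : x = (x - n • 1) + n • 1 := by ring
      rw [hxeq]
      exact Ideal.add_mem _ hn hn1
    · intro x hx
      intro y
      have hxy : x * y ∈ 𝔣 := Ideal.mul_mem_right _ _ hx
      exact ⟨x * y, ideal_le_ZPlusIdeal _ hxy, rfl⟩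
  have hSorder : IsOrder k S := ⟨hSle, by rw [hidxS]; exact hf.ne'⟩
  have huniq : ∀ O' : Subring k, IsOrder k O' → subringIndex O' (maximalOrder k) = f →
      conductorOf O' (maximalOrder k) = 𝔣 → O' = S := by
    intro O' hO' hidx' hcond'
    have hle : S ≤ O' := by
      rintro z ⟨y, ⟨n, hy⟩, rfl⟩
      have hy' : (y - n • 1 : ↥(maximalOrder k)) ∈ conductorOf O' (maximalOrder k) := by
        rw [hcond']
        exact hy
      have h1 : ((y - n • 1 : ↥(maximalOrder k)) : k) ∈ O' := by
        have := hy' 1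
        simpa using this
      have h2 : ((n • 1 : ↥(maximalOrder k)) : k) ∈ O' := by
        have hc2 : (n • (1 : ↥(maximalOrder k))) = ((n : ℤ) : ↥(maximalOrder k)) := by
          rw [zsmul_eq_mul, mul_one]
        rw [hc2]
        have hc3 : (((n : ℤ) : ↥(maximalOrder k)) : k) = ((n : ℤ) : k) := by push_cast; ring
        rw [hc3]
        exact intCast_mem O' n
      have := Subring.add_mem _ h1 h2
      simpa using this
    have h1 : S.toAddSubgroup ≤ O'.toAddSubgroup := by
      intro x hx
      rw [Subring.mem_toAddSubgroup] at hx ⊢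
      exact hle hx
    have h2 : O'.toAddSubgroup ≤ (maximalOrder k).toAddSubgroup := by
      intro x hx
      rw [Subring.mem_toAddSubgroup] at hx ⊢
      exact hO'.1 hx
    have hidx'' : AddSubgroup.relIndex O'.toAddSubgroup (maximalOrder k).toAddSubgroup = f := hidx'
    have hidxS' : AddSubgroup.relIndex S.toAddSubgroup (maximalOrder k).toAddSubgroup = f := hidxS
    have hchain := AddSubgroup.relIndex_mul_relIndex S.toAddSubgroup O'.toAddSubgroup
      (maximalOrder k).toAddSubgroup h1 h2
    rw [hidx'', hidxS'] at hchain
    have hone : AddSubgroup.relIndex S.toAddSubgroup O'.toAddSubgroup = 1 :=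
      Nat.eq_of_mul_eq_mul_right hf (by rw [hchain, one_mul])
    have hle2 : O'.toAddSubgroup ≤ S.toAddSubgroup := AddSubgroup.relIndex_eq_one.mp hone
    refine le_antisymm ?_ hle
    intro x hx
    have := hle2 (Subring.mem_toAddSubgroup.mpr hx)
    exact Subring.mem_toAddSubgroup.mp this
  constructor
  · exact ⟨S, ⟨hSorder, hidxS, hcond⟩, fun O' h => huniq O' h.1 h.2.1 h.2.2⟩
  · intro O' hO' hidx' hcond' x
    rw [huniq O' hO' hidx' hcond']
    exact hmemS x
end

section
/- Let O be an order in an étale algebra k over ℚ with conductor f. The extension map a ↦ aO_k is a multiplicative bijection between the monoid of integral O-ideals relatively prime to f and the monoid of integral O_k-ideals relatively prime to f, with inverse the contraction map A ↦ A ∩ O. In particular, for γ ∈ O ∩ k^× with γO + f = O one has (γO_k) ∩ O = γO. -/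
section Aux

variable {k : Type*} [CommRing k]

lemma mem_conductorIn {A B : Subring k} (h : A ≤ B) (x : ↥A) :
    x ∈ conductorIn A B h ↔ ∀ y : ↥B, (x : k) * (y : k) ∈ A := Iff.rfl

lemma mem_conductorOf {A B : Subring k} (x : ↥B) :
    x ∈ conductorOf A B ↔ ∀ y : ↥B, (x : k) * (y : k) ∈ A := Iff.rfl

lemma coe_inclusion' {A B : Subring k} (h : A ≤ B) (x : ↥A) :
    ((Subring.inclusion h x : ↥B) : k) = (x : k) := rfl

/-- Key absorption lemma: an element of `a O_B` times a conductor element lies in `a`. -/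
lemma map_mul_conductor_mem {A B : Subring k} (h : A ≤ B) (a : Ideal ↥A) {x : ↥B}
    (hx : x ∈ Ideal.map (Subring.inclusion h) a) :
    ∀ c ∈ conductorIn A B h, ∃ w ∈ a, (w : k) = (x : k) * (c : k) := by
  rw [Ideal.map] at hx
  induction hx using Submodule.span_induction with
  | mem z hz =>
      obtain ⟨w, hw, rfl⟩ := hz
      intro c hc
      exact ⟨w * c, Ideal.mul_mem_right _ _ hw, by push_cast [coe_inclusion']; ring⟩
  | zero => exact fun c hc => ⟨0, zero_mem _, by simp⟩
  | add x y hx hy ihx ihy =>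
      intro c hc
      obtain ⟨w1, hw1, e1⟩ := ihx c hc
      obtain ⟨w2, hw2, e2⟩ := ihy c hc
      exact ⟨w1 + w2, add_mem hw1 hw2, by push_cast [e1, e2]; ring⟩
  | smul r x hx ih =>
      intro c hc
      have hcr : (c : k) * (r : k) ∈ A := hc r
      set c2 : ↥A := ⟨(c : k) * (r : k), hcr⟩ with hc2def
      have hc2 : c2 ∈ conductorIn A B h := by
        intro y
        have := hc (r * y)
        simpa [hc2def, mul_assoc] using this
      obtain ⟨w, hw, e⟩ := ih c2 hc2
      refine ⟨w, hw, ?_⟩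
      rw [e]
      show _ = ((r * x : ↥B) : k) * (c : k)
      push_cast [hc2def]
      ring

end Aux

/-- **Dedekind.** Let `O` be an order with conductor `f` in an étale algebra
`k` over `ℚ`.  Extension `a ↦ a O_k` is a multiplicative bijection between integral
`O`-ideals prime to `f` and integral `O_k`-ideals prime to `f`, with inverse contraction
`A ↦ A ∩ O`.  In particular, for `γ ∈ O ∩ k^×` with `γO + f = O`, one has
`(γ O_k) ∩ O = γ O`. -/
theorem extension_contraction_bijection
    (k : Type*) [CommRing k] [Algebra ℚ k] [FiniteDimensional ℚ k] [IsReduced k]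
    (O : Subring k) (hO : IsOrder k O) :
    (∀ a : Ideal ↥O, a ⊔ conductorIn O (maximalOrder k) hO.1 = ⊤ →
      Ideal.comap (Subring.inclusion hO.1) (Ideal.map (Subring.inclusion hO.1) a) = a ∧
      Ideal.map (Subring.inclusion hO.1) a ⊔ conductorOf O (maximalOrder k) = ⊤) ∧
    (∀ A : Ideal ↥(maximalOrder k), A ⊔ conductorOf O (maximalOrder k) = ⊤ →
      Ideal.map (Subring.inclusion hO.1) (Ideal.comap (Subring.inclusion hO.1) A) = A ∧
      Ideal.comap (Subring.inclusion hO.1) A ⊔ conductorIn O (maximalOrder k) hO.1 = ⊤) ∧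
    (∀ a b : Ideal ↥O,
      Ideal.map (Subring.inclusion hO.1) (a * b)
        = Ideal.map (Subring.inclusion hO.1) a * Ideal.map (Subring.inclusion hO.1) b) ∧
    (∀ γ : ↥O, IsUnit (γ : k) →
      Ideal.span {γ} ⊔ conductorIn O (maximalOrder k) hO.1 = ⊤ →
      Ideal.comap (Subring.inclusion hO.1) (Ideal.span {Subring.inclusion hO.1 γ})
        = Ideal.span {γ}) := by
  have h := hO.1
  set f := conductorIn O (maximalOrder k) h with hf
  set F := conductorOf O (maximalOrder k) with hF
  set ι := Subring.inclusion h with hι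
  -- Part 1
  have part1 : ∀ a : Ideal ↥O, a ⊔ f = ⊤ →
      Ideal.comap ι (Ideal.map ι a) = a ∧ Ideal.map ι a ⊔ F = ⊤ := by
    intro a ha
    have h1 : (1 : ↥O) ∈ a ⊔ f := ha ▸ Submodule.mem_top
    obtain ⟨α, hα, c, hc, hαc⟩ := Submodule.mem_sup.mp h1
    constructor
    · refine le_antisymm ?_ (Ideal.le_comap_map)
      intro x hx
      rw [Ideal.mem_comap] at hx
      obtain ⟨w, hw, e⟩ := map_mul_conductor_mem h a hx c hc
      have hxc : x * c ∈ a := by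
        have : w = x * c := by
          apply Subtype.ext
          rw [e, coe_inclusion']
          push_cast
          ring
        exact this ▸ hw
      have : x = x * α + x * c := by rw [← mul_add, hαc, mul_one]
      rw [this]
      exact add_mem (Ideal.mul_mem_left _ _ hα) hxc
    · rw [Ideal.eq_top_iff_one]
      have : (1 : ↥(maximalOrder k)) = ι α + ι c := by
        apply Subtype.ext
        show (1 : k) = (α : k) + (c : k)
        have h2 := congrArg (fun z : ↥O => (z : k)) hαc
        push_cast at h2
        linear_combination -h2
      rw [this]
      refine Submodule.add_mem_sup (Ideal.mem_map_of_mem ι hα) ?_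
      intro y
      exact hc y
  refine ⟨part1, ?_, fun a b => Ideal.map_mul ι a b, ?_⟩
  · -- Part 2
    intro A hA
    have h1 : (1 : ↥(maximalOrder k)) ∈ A ⊔ F := hA ▸ Submodule.mem_top
    obtain ⟨α, hα, c, hc, hαc⟩ := Submodule.mem_sup.mp h1
    have hck : (c : k) ∈ O := by simpa using hc 1
    have hαk : (α : k) ∈ O := by
      have : (α : k) = 1 - (c : k) := by
        have := congrArg (fun z : ↥(maximalOrder k) => (z : k)) hαc
        push_cast at this
        linear_combination this
      rw [this]
      exact sub_mem (one_mem O) hck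
    set c' : ↥O := ⟨(c : k), hck⟩ with hc'def
    set α' : ↥O := ⟨(α : k), hαk⟩ with hα'def
    have hια : ι α' = α := rfl
    have hιc : ι c' = c := rfl
    have hα'A : α' ∈ Ideal.comap ι A := by rwa [Ideal.mem_comap, hια]
    constructor
    · refine le_antisymm (Ideal.map_comap_le) ?_
      intro x hx
      have hxc : x * c ∈ Ideal.map ι (Ideal.comap ι A) := by
        have hxck : (x : k) * (c : k) ∈ O := by
          have := hc x
          rwa [mul_comm] at this
        set w : ↥O := ⟨(x : k) * (c : k), hxck⟩ with hwdef
        have hιw : ι w = x * c := rfl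
        have hwA : w ∈ Ideal.comap ι A := by
          rw [Ideal.mem_comap, hιw]
          exact Ideal.mul_mem_right _ _ hx
        rw [← hιw]
        exact Ideal.mem_map_of_mem ι hwA
      have hxα : x * α ∈ Ideal.map ι (Ideal.comap ι A) := by
        rw [← hια]
        exact Ideal.mul_mem_left _ _ (Ideal.mem_map_of_mem ι hα'A)
      have : x = x * α + x * c := by rw [← mul_add, hαc, mul_one]
      rw [this]
      exact add_mem hxα hxc
    · rw [Ideal.eq_top_iff_one]
      have : (1 : ↥O) = α' + c' := by
        apply Subtype.ext
        show (1 : k) = (α : k) + (c : k)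
        have h2 := congrArg (fun z : ↥(maximalOrder k) => (z : k)) hαc
        push_cast at h2
        linear_combination -h2
      rw [this]
      refine Submodule.add_mem_sup hα'A ?_
      intro y
      exact hc y
  · -- Part 4
    intro γ _ hγ
    have := (part1 (Ideal.span {γ}) hγ).1
    rwa [Ideal.map_span, Set.image_singleton] at this
end
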